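/- Let C be a linear code of length n over R = ℤ₉[u]/(u²-u) with decomposition C = u·C₁ ⊕ (1-u)·C₂. Then C^⊥ = u·C₁^⊥ ⊕ (1-u)·C₂^⊥. -/

import Mathlib

open Polynomial

noncomputable section

/-- The ring `R = ℤ₉[u]/(u² - u)`. -/
abbrev R9 : Type := Polynomial (ZMod 9) ⧸ Ideal.span {(X : Polynomial (ZMod 9)) ^ 2 - X}

/-- The element `u` of `R`, the image of `X`. -/
def uu : R9 := Ideal.Quotient.mk _ (X : Polynomial (ZMod 9))

/-- The canonical embedding `ℤ₉ → R`. -/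
def ι : ZMod 9 →+* R9 :=
  (Ideal.Quotient.mk _).comp (Polynomial.C : ZMod 9 →+* Polynomial (ZMod 9))
/-- The word `u·x + (1-u)·y ∈ Rⁿ` built from `x, y ∈ ℤ₉ⁿ`. -/
def combine (n : ℕ) (x y : Fin n → ZMod 9) : Fin n → R9 :=
  fun i => uu * ι (x i) + (1 - uu) * ι (y i)

/-- `C₁ = {x ∈ ℤ₉ⁿ : ∃ y, ux + (1-u)y ∈ C}`. -/
def comp1 (n : ℕ) (S : Set (Fin n → R9)) : Set (Fin n → ZMod 9) :=
  {x | ∃ y, combine n x y ∈ S}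

/-- `C₂ = {y ∈ ℤ₉ⁿ : ∃ x, ux + (1-u)y ∈ C}`. -/
def comp2 (n : ℕ) (S : Set (Fin n → R9)) : Set (Fin n → ZMod 9) :=
  {y | ∃ x, combine n x y ∈ S}

/-- The Euclidean dual of a set of words over `R`. -/
def dualR (n : ℕ) (S : Set (Fin n → R9)) : Set (Fin n → R9) :=
  {x | ∀ c ∈ S, ∑ i, x i * c i = 0}

/-- The Euclidean dual of a set of words over `ℤ₉`. -/
def dualZ (n : ℕ) (S : Set (Fin n → ZMod 9)) : Set (Fin n → ZMod 9) :=
  {x | ∀ c ∈ S, ∑ i, x i * c i = 0}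

lemma uu_idem : uu * uu = uu := by
  have h : (Ideal.Quotient.mk (Ideal.span {(X : Polynomial (ZMod 9)) ^ 2 - X}))
      ((X : Polynomial (ZMod 9)) ^ 2 - X) = 0 :=
    Ideal.Quotient.eq_zero_iff_mem.2 (Ideal.subset_span rfl)
  rw [map_sub, sub_eq_zero] at h
  rw [uu, ← map_mul, ← sq]
  exact h

def phi1 : R9 →+* ZMod 9 :=
  Ideal.Quotient.lift _ (evalRingHom 1) (fun a ha => by
    have hle : Ideal.span {(X : Polynomial (ZMod 9)) ^ 2 - X} ≤
        RingHom.ker (evalRingHom (1 : ZMod 9)) := by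
      rw [Ideal.span_le]
      intro p hp
      simp only [Set.mem_singleton_iff] at hp
      subst hp
      simp [RingHom.mem_ker]
    exact hle ha)

def phi2 : R9 →+* ZMod 9 :=
  Ideal.Quotient.lift _ (evalRingHom 0) (fun a ha => by
    have hle : Ideal.span {(X : Polynomial (ZMod 9)) ^ 2 - X} ≤
        RingHom.ker (evalRingHom (0 : ZMod 9)) := by
      rw [Ideal.span_le]
      intro p hp
      simp only [Set.mem_singleton_iff] at hp
      subst hp
      simp [RingHom.mem_ker]
    exact hle ha)

@[simp] lemma phi1_uu : phi1 uu = 1 := (Ideal.Quotient.lift_mk _ _ _).trans (by simp)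
@[simp] lemma phi2_uu : phi2 uu = 0 := (Ideal.Quotient.lift_mk _ _ _).trans (by simp)
@[simp] lemma phi1_iota (a : ZMod 9) : phi1 (ι a) = a := (Ideal.Quotient.lift_mk _ _ _).trans (by simp)
@[simp] lemma phi2_iota (a : ZMod 9) : phi2 (ι a) = a := (Ideal.Quotient.lift_mk _ _ _).trans (by simp)

def psi : R9 →+* R9 where
  toFun r := uu * ι (phi1 r) + (1 - uu) * ι (phi2 r)
  map_one' := by simp
  map_mul' r s := by
    simp only [map_mul]
    linear_combination (-(ι (phi1 r) * ι (phi1 s)) + ι (phi1 r) * ι (phi2 s)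
      + ι (phi2 r) * ι (phi1 s) - ι (phi2 r) * ι (phi2 s)) * uu_idem
  map_zero' := by simp
  map_add' r s := by simp only [map_add]; ring

lemma decomp (r : R9) : uu * ι (phi1 r) + (1 - uu) * ι (phi2 r) = r := by
  have h : psi.comp (Ideal.Quotient.mk (Ideal.span
      {(X : Polynomial (ZMod 9)) ^ 2 - X})) = Ideal.Quotient.mk _ := by
    apply Polynomial.ringHom_ext
    · intro a
      show uu * ι (phi1 (ι a)) + (1 - uu) * ι (phi2 (ι a)) = ι a
      simp; ring
    · show uu * ι (phi1 uu) + (1 - uu) * ι (phi2 uu) = uu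
      simp
  obtain ⟨p, rfl⟩ := Ideal.Quotient.mk_surjective r
  exact RingHom.congr_fun h p

lemma combine_mul (n : ℕ) (x y a b : Fin n → ZMod 9) (i : Fin n) :
    combine n x y i * combine n a b i
      = uu * ι (x i * a i) + (1 - uu) * ι (y i * b i) := by
  simp only [combine, map_mul]
  linear_combination (ι (x i) * ι (a i) - ι (x i) * ι (b i)
      - ι (y i) * ι (a i) + ι (y i) * ι (b i)) * uu_idem

lemma sum_combine_mul (n : ℕ) (x y a b : Fin n → ZMod 9) :
    ∑ i, combine n x y i * combine n a b i
      = uu * ι (∑ i, x i * a i) + (1 - uu) * ι (∑ i, y i * b i) := by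
  rw [Finset.sum_congr rfl (fun i _ => combine_mul n x y a b i),
    Finset.sum_add_distrib, ← Finset.mul_sum, ← Finset.mul_sum, ← map_sum, ← map_sum]

lemma eq_zero_of (s t : ZMod 9) (h : uu * ι s + (1 - uu) * ι t = 0) :
    s = 0 ∧ t = 0 := by
  constructor
  · have := congrArg phi1 h
    simpa using this
  · have := congrArg phi2 h
    simpa using this

theorem stmt10 (n : ℕ) (C : Submodule R9 (Fin n → R9)) :
    dualR n (C : Set (Fin n → R9)) =
      {c | ∃ x ∈ dualZ n (comp1 n (C : Set (Fin n → R9))),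
           ∃ y ∈ dualZ n (comp2 n (C : Set (Fin n → R9))), c = combine n x y} := by
  ext c
  constructor
  · intro hc
    refine ⟨fun i => phi1 (c i), ?_, fun i => phi2 (c i), ?_, ?_⟩
    · intro a ⟨b, hab⟩
      have h0 := hc _ hab
      have hc' : c = combine n (fun i => phi1 (c i)) (fun i => phi2 (c i)) := by
        funext i; exact (decomp (c i)).symm
      rw [hc', sum_combine_mul] at h0
      exact (eq_zero_of _ _ h0).1
    · intro b ⟨a, hab⟩
      have h0 := hc _ hab
      have hc' : c = combine n (fun i => phi1 (c i)) (fun i => phi2 (c i)) := by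
        funext i; exact (decomp (c i)).symm
      rw [hc', sum_combine_mul] at h0
      exact (eq_zero_of _ _ h0).2
    · funext i; exact (decomp (c i)).symm
  · rintro ⟨x, hx, y, hy, rfl⟩
    intro d hd
    have hd' : d = combine n (fun i => phi1 (d i)) (fun i => phi2 (d i)) := by
      funext i; exact (decomp (d i)).symm
    have h1 : (fun i => phi1 (d i)) ∈ comp1 n (C : Set (Fin n → R9)) :=
      ⟨fun i => phi2 (d i), by rw [← hd']; exact hd⟩
    have h2 : (fun i => phi2 (d i)) ∈ comp2 n (C : Set (Fin n → R9)) :=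
      ⟨fun i => phi1 (d i), by rw [← hd']; exact hd⟩
    calc ∑ i, combine n x y i * d i
        = ∑ i, combine n x y i * combine n (fun i => phi1 (d i)) (fun i => phi2 (d i)) i := by
          rw [← hd']
      _ = uu * ι (∑ i, x i * phi1 (d i)) + (1 - uu) * ι (∑ i, y i * phi2 (d i)) :=
          sum_combine_mul ..
      _ = 0 := by rw [hx _ h1, hy _ h2]; simp
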